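/- Let R > 0 and let k : [0, R] → ℝ be continuously differentiable. Define q(x) = 2∫_x^R r·k(r)/√(r² − x²) dr for x ∈ [0, R]. Then for every r ∈ (0, R), k(r) = −(1/π)·[ (q(R) − q(r))/√(R² − r²) + ∫_r^R x·(q(x) − q(r))/(x² − r²)^{3/2} dx ], where the integral converges (the factor q(x) − q(r) compensates the non-integrable singularity (x² − r²)^{−3/2} at x = r). -/

import Mathlib

open MeasureTheory intervalIntegral Real Set

private lemma hasDerivAt_sqrt_sq_sub {t x : ℝ} (hu : 0 < x^2 - t^2) :
    HasDerivAt (fun y : ℝ => Real.sqrt (y^2 - t^2)) (x / Real.sqrt (x^2 - t^2)) x := by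
  have h1 : HasDerivAt (fun y : ℝ => y^2 - t^2) (2*x) x := by
    simpa using ((hasDerivAt_pow 2 x).sub_const (t^2))
  have := (Real.hasDerivAt_sqrt (ne_of_gt hu)).comp x h1
  refine this.congr_deriv ?_
  symm
  have := Real.sqrt_pos.2 hu
  field_simp

private lemma keyB {t s : ℝ} (ht : 0 < t) (hts : t < s) :
    IntegrableOn (fun x => x * (Real.sqrt (s^2 - t^2) - Real.sqrt (s^2 - x^2)) / Real.sqrt ((x^2 - t^2)^3)) (Set.Ioc t s) volume ∧
    ∫ x in t..s, x * (Real.sqrt (s^2 - t^2) - Real.sqrt (s^2 - x^2)) / Real.sqrt ((x^2 - t^2)^3) = π/2 - 1 := by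
  have hst2 : t^2 < s^2 := by nlinarith
  set c := Real.sqrt (s^2 - t^2) with hcdef
  have hc : 0 < c := Real.sqrt_pos.2 (by linarith)
  have hc2 : c^2 = s^2 - t^2 := Real.sq_sqrt (by linarith)
  set Φ : ℝ → ℝ := fun x => Real.arcsin (Real.sqrt (x^2 - t^2)/c)
      - Real.sqrt (x^2 - t^2)/(Real.sqrt (s^2 - x^2) + c) with hΦ
  have hderiv : ∀ x ∈ Set.Ioo t s, HasDerivAt Φ
      (x * (c - Real.sqrt (s^2 - x^2)) / Real.sqrt ((x^2 - t^2)^3)) x := by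
    intro x hx
    obtain ⟨hx1, hx2⟩ := hx
    have hx0 : 0 < x := ht.trans hx1
    have hu : (0:ℝ) < x^2 - t^2 := by nlinarith
    have hv : (0:ℝ) < s^2 - x^2 := by nlinarith
    set a := Real.sqrt (x^2 - t^2) with hadef
    set b := Real.sqrt (s^2 - x^2) with hbdef
    have ha : 0 < a := Real.sqrt_pos.2 hu
    have hb : 0 < b := Real.sqrt_pos.2 hv
    have ha2 : a^2 = x^2 - t^2 := Real.sq_sqrt hu.le
    have hb2 : b^2 = s^2 - x^2 := Real.sq_sqrt hv.le
    have hcab : c^2 = a^2 + b^2 := by rw [ha2, hb2]; linarith [hc2]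
    have h1 : HasDerivAt (fun y : ℝ => y^2 - t^2) (2*x) x := by
      simpa using ((hasDerivAt_pow 2 x).sub_const (t^2))
    have h2 : HasDerivAt (fun y : ℝ => Real.sqrt (y^2 - t^2)) (x/a) x := by
      have := (Real.hasDerivAt_sqrt (ne_of_gt hu)).comp x h1
      refine this.congr_deriv ?_
      symm
      rw [← hadef]
      field_simp
    have h1' : HasDerivAt (fun y : ℝ => s^2 - y^2) (-(2*x)) x := by
      simpa using ((hasDerivAt_pow 2 x).const_sub (s^2))
    have h5 : HasDerivAt (fun y : ℝ => Real.sqrt (s^2 - y^2)) (-(x/b)) x := by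
      have := (Real.hasDerivAt_sqrt (ne_of_gt hv)).comp x h1'
      refine this.congr_deriv ?_
      symm
      rw [← hbdef]
      field_simp
    have hac : a/c < 1 := by
      rw [div_lt_one hc]
      exact Real.sqrt_lt_sqrt hu.le (by nlinarith)
    have hac0 : 0 < a/c := div_pos ha hc
    have h3 : HasDerivAt (fun y : ℝ => Real.sqrt (y^2 - t^2)/c) (x/a/c) x := h2.div_const c
    have h4 : HasDerivAt (fun y : ℝ => Real.arcsin (Real.sqrt (y^2 - t^2)/c))
        (1 / Real.sqrt (1 - (a/c)^2) * (x/a/c)) x := by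
      have h0 := Real.hasDerivAt_arcsin (ne_of_gt (by linarith : -1 < a/c)) (ne_of_lt hac)
      rw [hadef] at h0 h3 ⊢
      exact HasDerivAt.comp x h0 h3
    have hsqrt1 : Real.sqrt (1 - (a/c)^2) = b/c := by
      have : 1 - (a/c)^2 = (b/c)^2 := by
        field_simp
        linarith [hcab]
      rw [this, Real.sqrt_sq (by positivity)]
    have h6 : HasDerivAt (fun y : ℝ => Real.sqrt (s^2 - y^2) + c) (-(x/b)) x := h5.add_const c
    have hbc : b + c ≠ 0 := by positivity
    have h7 : HasDerivAt (fun y : ℝ => Real.sqrt (y^2 - t^2)/(Real.sqrt (s^2 - y^2) + c))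
        ((x/a * (b + c) - a * (-(x/b)))/(b+c)^2) x := h2.div h6 hbc
    have hcube : Real.sqrt ((x^2 - t^2)^3) = a^2*a := by
      rw [← ha2, show (a^2)^3 = (a^2*a)^2 by ring, Real.sqrt_sq (by positivity)]
    have hcbcb : (c - b)*(c + b) = a^2 := by linear_combination hcab
    have hquad : b^2 + b*c + a^2 = c*(b + c) := by linear_combination -hcab
    have d1 : 1 / Real.sqrt (1 - (a/c)^2) * (x/a/c) = x/(a*b) := by
      rw [hsqrt1]
      field_simp
    have d2 : (x/a * (b + c) - a * (-(x/b)))/(b+c)^2 = x*c/(a*b*(b+c)) := by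
      have hstep : x/a * (b + c) - a * (-(x/b)) = x*(b^2 + b*c + a^2)/(a*b) := by
        field_simp
        ring
      rw [hstep, hquad]
      field_simp
    have d3 : x * (c - b) / Real.sqrt ((x^2 - t^2)^3) = x/(a*(b+c)) := by
      rw [hcube]
      rw [div_eq_div_iff (by positivity) (by positivity)]
      linear_combination (x*a) * hcbcb
    have key : 1 / Real.sqrt (1 - (a/c)^2) * (x/a/c) - (x/a * (b + c) - a * (-(x/b)))/(b+c)^2
        = x * (c - b) / Real.sqrt ((x^2 - t^2)^3) := by
      rw [d1, d2, d3]
      field_simp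
      ring
    exact key ▸ (h4.sub h7)
  have hcont : ContinuousOn Φ (Set.Icc t s) := by
    rw [hΦ]
    apply ContinuousOn.sub
    · exact Real.continuous_arcsin.comp_continuousOn
        (((Real.continuous_sqrt.comp (by continuity)).div_const c).continuousOn)
    · apply ContinuousOn.div
      · exact (Real.continuous_sqrt.comp (by continuity)).continuousOn
      · exact ((Real.continuous_sqrt.comp (by continuity)).add continuous_const).continuousOn
      · intro y _
        have := Real.sqrt_nonneg (s^2 - y^2)
        intro h
        nlinarith [hc]
  have hpos : ∀ x ∈ Set.Ioo t s, 0 ≤ x * (c - Real.sqrt (s^2 - x^2)) / Real.sqrt ((x^2 - t^2)^3) := by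
    intro x hx
    have hx0 : 0 < x := ht.trans hx.1
    have hble : Real.sqrt (s^2 - x^2) ≤ c := Real.sqrt_le_sqrt (by nlinarith [hx.1, ht])
    exact div_nonneg (mul_nonneg hx0.le (by linarith)) (Real.sqrt_nonneg _)
  have hint : IntegrableOn (fun x => x * (c - Real.sqrt (s^2 - x^2)) / Real.sqrt ((x^2 - t^2)^3))
      (Set.Ioc t s) volume := integrableOn_deriv_of_nonneg hcont hderiv hpos
  have hii : IntervalIntegrable (fun x => x * (c - Real.sqrt (s^2 - x^2)) / Real.sqrt ((x^2 - t^2)^3))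
      volume t s := (intervalIntegrable_iff_integrableOn_Ioc_of_le hts.le).2 hint
  have hval := integral_eq_sub_of_hasDeriv_right_of_le hts.le hcont
      (fun x hx => (hderiv x hx).hasDerivWithinAt) hii
  constructor
  · exact hint
  · rw [hval, hΦ]
    simp only [sub_self, Real.sqrt_zero, zero_add, zero_div, div_self hc.ne',
      Real.arcsin_one, Real.arcsin_zero, zero_sub, sub_zero, sub_neg_eq_add]
    rw [← hcdef, div_self hc.ne', Real.arcsin_one]

private lemma keyB2 {t s R : ℝ} (ht : 0 < t) (hts : t < s) (hsR : s ≤ R) :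
    IntervalIntegrable (fun x => x / Real.sqrt ((x^2 - t^2)^3)) volume s R ∧
    ∫ x in s..R, x / Real.sqrt ((x^2 - t^2)^3)
      = 1/Real.sqrt (s^2 - t^2) - 1/Real.sqrt (R^2 - t^2) := by
  have hpos : ∀ x ∈ Set.Icc s R, 0 < x^2 - t^2 := by
    intro x hx
    have := hx.1
    nlinarith [ht, hts, hx.1]
  have hcube : ∀ x ∈ Set.Icc s R, Real.sqrt ((x^2 - t^2)^3)
      = (x^2 - t^2) * Real.sqrt (x^2 - t^2) := by
    intro x hx
    have h := hpos x hx
    rw [show ((x:ℝ)^2 - t^2)^3 = ((x^2-t^2) * Real.sqrt (x^2-t^2))^2 by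
        rw [mul_pow, Real.sq_sqrt h.le]; ring,
      Real.sqrt_sq (by positivity)]
  have hderiv : ∀ x ∈ Set.uIcc s R, HasDerivAt (fun y => -(Real.sqrt (y^2 - t^2))⁻¹)
      (x / Real.sqrt ((x^2 - t^2)^3)) x := by
    intro x hx
    rw [uIcc_of_le hsR] at hx
    have h := hpos x hx
    have ha : 0 < Real.sqrt (x^2 - t^2) := Real.sqrt_pos.2 h
    have h2 := (hasDerivAt_sqrt_sq_sub h).inv ha.ne'
    have h3 := h2.neg
    refine h3.congr_deriv ?_
    symm
    rw [hcube x hx]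
    field_simp
    ring_nf
    rw [Real.sq_sqrt h.le]
    ring
  have hcontd : ContinuousOn (fun x => x / Real.sqrt ((x^2 - t^2)^3)) (Set.uIcc s R) := by
    rw [uIcc_of_le hsR]
    apply ContinuousOn.div continuousOn_id
    · exact (Real.continuous_sqrt.comp (by continuity)).continuousOn
    · intro x hx
      have := hpos x hx
      positivity
  have hii : IntervalIntegrable (fun x => x / Real.sqrt ((x^2 - t^2)^3)) volume s R :=
    hcontd.intervalIntegrable
  refine ⟨hii, ?_⟩
  rw [integral_eq_sub_of_hasDerivAt hderiv hii]
  ring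

private lemma singInt {x R : ℝ} (hx : 0 < x) (hxR : x ≤ R) (k₀ : ℝ → ℝ) (hk₀ : Continuous k₀) :
    IntervalIntegrable (fun s => s * k₀ s / Real.sqrt (s^2 - x^2)) volume x R := by
  obtain ⟨M, hM⟩ := (isCompact_Icc : IsCompact (Set.Icc x R)).exists_bound_of_continuousOn
    hk₀.continuousOn
  have hbase : IntegrableOn (fun s => s / Real.sqrt (s^2 - x^2)) (Set.Ioc x R) volume := by
    apply integrableOn_deriv_of_nonneg (g := fun s => Real.sqrt (s^2 - x^2))
    · exact (Real.continuous_sqrt.comp (by continuity)).continuousOn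
    · intro s hs
      exact hasDerivAt_sqrt_sq_sub (by nlinarith [hs.1])
    · intro s hs
      exact div_nonneg (by linarith [hs.1]) (Real.sqrt_nonneg _)
  rw [intervalIntegrable_iff_integrableOn_Ioc_of_le hxR]
  apply Integrable.mono' (hbase.const_mul M)
  · exact ((measurable_id.mul hk₀.measurable).div
      (Real.continuous_sqrt.measurable.comp (by fun_prop))).aestronglyMeasurable
  · filter_upwards [ae_restrict_mem measurableSet_Ioc] with s hs
    have hs0 : 0 < s := hx.trans hs.1
    have hsq : 0 ≤ Real.sqrt (s^2 - x^2) := Real.sqrt_nonneg _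
    have hMs := hM s ⟨hs.1.le, hs.2⟩
    have : ‖s * k₀ s / Real.sqrt (s^2 - x^2)‖ = s * ‖k₀ s‖ / Real.sqrt (s^2 - x^2) := by
      rw [norm_div, norm_mul, Real.norm_of_nonneg hs0.le, Real.norm_of_nonneg hsq]
    rw [this]
    have hD : 0 < Real.sqrt (s^2 - x^2) := Real.sqrt_pos.2 (by nlinarith [hs.1])
    rw [show M * (s / Real.sqrt (s^2 - x^2)) = s * M / Real.sqrt (s^2 - x^2) by ring]
    rw [div_le_div_iff₀ hD hD]
    have h1 : s * ‖k₀ s‖ ≤ s * M := mul_le_mul_of_nonneg_left hMs hs0.le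
    nlinarith [h1, hD.le]

private lemma repA {R : ℝ} (k₀ k₁ : ℝ → ℝ) (hk₀ : Continuous k₀) (hk₁ : Continuous k₁)
    (hd : ∀ s ∈ Set.Ioo 0 R, HasDerivAt k₀ (k₁ s) s) {x : ℝ} (hx : 0 < x) (hxR : x ≤ R) :
    ∫ s in x..R, s * k₀ s / Real.sqrt (s^2 - x^2)
      = k₀ R * Real.sqrt (R^2 - x^2) - ∫ s in x..R, k₁ s * Real.sqrt (s^2 - x^2) := by
  have hcF : ContinuousOn (fun s => k₀ s * Real.sqrt (s^2 - x^2)) (Set.Icc x R) :=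
    (hk₀.mul (Real.continuous_sqrt.comp (by continuity))).continuousOn
  have hint1 : IntervalIntegrable (fun s => k₁ s * Real.sqrt (s^2 - x^2)) volume x R :=
    (hk₁.mul (Real.continuous_sqrt.comp (by continuity))).continuousOn.intervalIntegrable
  have hint2 : IntervalIntegrable (fun s => s * k₀ s / Real.sqrt (s^2 - x^2)) volume x R :=
    singInt hx hxR k₀ hk₀
  have hFd : ∀ s ∈ Set.Ioo x R, HasDerivWithinAt (fun s => k₀ s * Real.sqrt (s^2 - x^2))
      (k₁ s * Real.sqrt (s^2 - x^2) + s * k₀ s / Real.sqrt (s^2 - x^2)) (Set.Ioi s) s := by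
    intro s hs
    have hu : 0 < s^2 - x^2 := by nlinarith [hs.1]
    have := (hd s ⟨hx.trans hs.1, hs.2⟩).mul (hasDerivAt_sqrt_sq_sub hu)
    have h2 : HasDerivAt (fun s => k₀ s * Real.sqrt (s^2 - x^2))
        (k₁ s * Real.sqrt (s^2 - x^2) + s * k₀ s / Real.sqrt (s^2 - x^2)) s := by
      refine this.congr_deriv ?_
      symm
      field_simp
    exact h2.hasDerivWithinAt
  have hft := integral_eq_sub_of_hasDeriv_right_of_le hxR hcF hFd (hint1.add hint2)
  rw [integral_add hint1 hint2, sub_self, Real.sqrt_zero, mul_zero, sub_zero] at hft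
  linarith

private lemma fub3 {t R : ℝ} (ht : 0 < t) (htR : t < R) (k₁ : ℝ → ℝ) (hk₁ : Continuous k₁) :
    Integrable (Function.uncurry fun x s =>
      if t < x ∧ x < s ∧ s < R then
        (2 * k₁ s) * (x * (Real.sqrt (s^2 - t^2) - Real.sqrt (s^2 - x^2)) / Real.sqrt ((x^2 - t^2)^3))
      else 0) (volume.prod volume) := by
  have hUm : MeasurableSet {p : ℝ × ℝ | t < p.1 ∧ p.1 < p.2 ∧ p.2 < R} := by
    apply MeasurableSet.inter (measurableSet_lt measurable_const measurable_fst)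
    exact MeasurableSet.inter (measurableSet_lt measurable_fst measurable_snd)
      (measurableSet_lt measurable_snd measurable_const)
  have hGm : Measurable (fun p : ℝ × ℝ =>
      (2 * k₁ p.2) * (p.1 * (Real.sqrt (p.2^2 - t^2) - Real.sqrt (p.2^2 - p.1^2)) / Real.sqrt ((p.1^2 - t^2)^3))) := by
    apply Measurable.mul
    · exact (hk₁.measurable.comp measurable_snd).const_mul 2
    · apply Measurable.div
      · apply Measurable.mul measurable_fst
        apply Measurable.sub <;>
          exact Real.continuous_sqrt.measurable.comp (by fun_prop)
      · exact Real.continuous_sqrt.measurable.comp (by fun_prop)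
  have hmeas : AEStronglyMeasurable (Function.uncurry fun x s =>
      if t < x ∧ x < s ∧ s < R then
        (2 * k₁ s) * (x * (Real.sqrt (s^2 - t^2) - Real.sqrt (s^2 - x^2)) / Real.sqrt ((x^2 - t^2)^3))
      else 0) (volume.prod volume) := by
    apply Measurable.aestronglyMeasurable
    exact Measurable.ite hUm hGm measurable_const
  rw [MeasureTheory.integrable_prod_iff' hmeas]
  constructor
  · apply Filter.Eventually.of_forall
    intro s
    by_cases hs : t < s ∧ s < R
    · have heq : (fun x => Function.uncurry (fun x s =>
          if t < x ∧ x < s ∧ s < R then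
            (2 * k₁ s) * (x * (Real.sqrt (s^2 - t^2) - Real.sqrt (s^2 - x^2)) / Real.sqrt ((x^2 - t^2)^3))
          else 0) (x, s))
          = (Set.Ioo t s).indicator (fun x =>
            (2 * k₁ s) * (x * (Real.sqrt (s^2 - t^2) - Real.sqrt (s^2 - x^2)) / Real.sqrt ((x^2 - t^2)^3))) := by
        funext x
        simp only [Function.uncurry, Set.indicator_apply, Set.mem_Ioo]
        by_cases hx : t < x ∧ x < s
        · rw [if_pos ⟨hx.1, hx.2, hs.2⟩, if_pos hx]
        · rw [if_neg (by tauto), if_neg hx]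
      rw [heq, integrable_indicator_iff measurableSet_Ioo]
      exact (((keyB ht hs.1).1).mono_set Set.Ioo_subset_Ioc_self).const_mul _
    · have heq : (fun x => Function.uncurry (fun x s =>
          if t < x ∧ x < s ∧ s < R then
            (2 * k₁ s) * (x * (Real.sqrt (s^2 - t^2) - Real.sqrt (s^2 - x^2)) / Real.sqrt ((x^2 - t^2)^3))
          else 0) (x, s)) = (fun _ => (0:ℝ)) := by
        funext x
        simp only [Function.uncurry]
        rw [if_neg]
        rintro ⟨h1, h2, h3⟩
        exact hs ⟨h1.trans h2, h3⟩
      rw [heq]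
      exact integrable_zero _ _ _
  · have heq : (fun s => ∫ x, ‖Function.uncurry (fun x s =>
        if t < x ∧ x < s ∧ s < R then
          (2 * k₁ s) * (x * (Real.sqrt (s^2 - t^2) - Real.sqrt (s^2 - x^2)) / Real.sqrt ((x^2 - t^2)^3))
        else 0) (x, s)‖)
        = (Set.Ioo t R).indicator (fun s => ‖2 * k₁ s‖ * (π/2 - 1)) := by
      funext s
      by_cases hs : s ∈ Set.Ioo t R
      · rw [Set.indicator_of_mem hs]
        have h1 : ∀ x : ℝ, ‖Function.uncurry (fun x s =>
            if t < x ∧ x < s ∧ s < R then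
              (2 * k₁ s) * (x * (Real.sqrt (s^2 - t^2) - Real.sqrt (s^2 - x^2)) / Real.sqrt ((x^2 - t^2)^3))
            else 0) (x, s)‖
            = (Set.Ioo t s).indicator (fun x => ‖2 * k₁ s‖ *
              (x * (Real.sqrt (s^2 - t^2) - Real.sqrt (s^2 - x^2)) / Real.sqrt ((x^2 - t^2)^3))) x := by
          intro x
          simp only [Function.uncurry, Set.indicator_apply, Set.mem_Ioo]
          by_cases hx : t < x ∧ x < s
          · rw [if_pos ⟨hx.1, hx.2, hs.2⟩, if_pos hx, norm_mul]
            congr 1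
            rw [Real.norm_of_nonneg]
            have hx0 : 0 < x := ht.trans hx.1
            have hble : Real.sqrt (s^2 - x^2) ≤ Real.sqrt (s^2 - t^2) :=
              Real.sqrt_le_sqrt (by nlinarith [hx.1])
            exact div_nonneg (mul_nonneg hx0.le (by linarith)) (Real.sqrt_nonneg _)
          · rw [if_neg (by tauto), if_neg hx, norm_zero]
        simp only [h1]
        rw [MeasureTheory.integral_indicator measurableSet_Ioo]
        rw [MeasureTheory.integral_const_mul]
        congr 1
        have := (keyB ht hs.1).2
        rw [intervalIntegral.integral_of_le hs.1.le, MeasureTheory.integral_Ioc_eq_integral_Ioo] at this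
        exact this
      · rw [Set.indicator_of_notMem hs]
        have h0 : ∀ x : ℝ, Function.uncurry (fun x s =>
            if t < x ∧ x < s ∧ s < R then
              (2 * k₁ s) * (x * (Real.sqrt (s^2 - t^2) - Real.sqrt (s^2 - x^2)) / Real.sqrt ((x^2 - t^2)^3))
            else 0) (x, s) = 0 := by
          intro x
          simp only [Function.uncurry]
          rw [if_neg]
          rintro ⟨h1, h2, h3⟩
          exact hs ⟨h1.trans h2, h3⟩
        simp only [h0, norm_zero, MeasureTheory.integral_zero]
    rw [heq, integrable_indicator_iff measurableSet_Ioo]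
    have hI : IntegrableOn (fun s => ‖2 * k₁ s‖ * (π/2 - 1)) (Set.Icc t R) volume :=
      ((continuous_const.mul hk₁).norm.mul continuous_const).continuousOn.integrableOn_compact isCompact_Icc
    exact hI.mono_set Set.Ioo_subset_Icc_self

private lemma fub2 {t R : ℝ} (ht : 0 < t) (htR : t < R) (k₁ : ℝ → ℝ) (hk₁ : Continuous k₁) :
    Integrable (Function.uncurry fun x s =>
      if t < s ∧ s < x ∧ x ≤ R then
        (2 * (k₁ s * Real.sqrt (s^2 - t^2))) * (x / Real.sqrt ((x^2 - t^2)^3))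
      else 0) (volume.prod volume) := by
  have hUm : MeasurableSet {p : ℝ × ℝ | t < p.2 ∧ p.2 < p.1 ∧ p.1 ≤ R} := by
    apply MeasurableSet.inter (measurableSet_lt measurable_const measurable_snd)
    exact MeasurableSet.inter (measurableSet_lt measurable_snd measurable_fst)
      (measurableSet_le measurable_fst measurable_const)
  have hGm : Measurable (fun p : ℝ × ℝ =>
      (2 * (k₁ p.2 * Real.sqrt (p.2^2 - t^2))) * (p.1 / Real.sqrt ((p.1^2 - t^2)^3))) := by
    apply Measurable.mul
    · exact ((hk₁.measurable.comp measurable_snd).mul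
        (Real.continuous_sqrt.measurable.comp (by fun_prop))).const_mul 2
    · exact Measurable.div measurable_fst (Real.continuous_sqrt.measurable.comp (by fun_prop))
  have hmeas : AEStronglyMeasurable (Function.uncurry fun x s =>
      if t < s ∧ s < x ∧ x ≤ R then
        (2 * (k₁ s * Real.sqrt (s^2 - t^2))) * (x / Real.sqrt ((x^2 - t^2)^3))
      else 0) (volume.prod volume) := by
    apply Measurable.aestronglyMeasurable
    exact Measurable.ite hUm hGm measurable_const
  rw [MeasureTheory.integrable_prod_iff' hmeas]
  constructor
  · apply Filter.Eventually.of_forall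
    intro s
    by_cases hs : t < s ∧ s < R
    · have heq : (fun x => Function.uncurry (fun x s =>
          if t < s ∧ s < x ∧ x ≤ R then
            (2 * (k₁ s * Real.sqrt (s^2 - t^2))) * (x / Real.sqrt ((x^2 - t^2)^3))
          else 0) (x, s))
          = (Set.Ioc s R).indicator (fun x =>
            (2 * (k₁ s * Real.sqrt (s^2 - t^2))) * (x / Real.sqrt ((x^2 - t^2)^3))) := by
        funext x
        simp only [Function.uncurry, Set.indicator_apply, Set.mem_Ioc]
        by_cases hx : s < x ∧ x ≤ R
        · rw [if_pos ⟨hs.1, hx.1, hx.2⟩, if_pos hx]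
        · rw [if_neg (by tauto), if_neg hx]
      rw [heq, integrable_indicator_iff measurableSet_Ioc]
      have := (intervalIntegrable_iff_integrableOn_Ioc_of_le hs.2.le).1 (keyB2 ht hs.1 hs.2.le).1
      exact this.const_mul _
    · have heq : (fun x => Function.uncurry (fun x s =>
          if t < s ∧ s < x ∧ x ≤ R then
            (2 * (k₁ s * Real.sqrt (s^2 - t^2))) * (x / Real.sqrt ((x^2 - t^2)^3))
          else 0) (x, s)) = (fun _ => (0:ℝ)) := by
        funext x
        simp only [Function.uncurry]
        rw [if_neg]
        rintro ⟨h1, h2, h3⟩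
        exact hs ⟨h1, lt_of_lt_of_le h2 h3⟩
      rw [heq]
      exact integrable_zero _ _ _
  · have heq : (fun s => ∫ x, ‖Function.uncurry (fun x s =>
        if t < s ∧ s < x ∧ x ≤ R then
          (2 * (k₁ s * Real.sqrt (s^2 - t^2))) * (x / Real.sqrt ((x^2 - t^2)^3))
        else 0) (x, s)‖)
        = (Set.Ioo t R).indicator (fun s => ‖2 * (k₁ s * Real.sqrt (s^2 - t^2))‖ *
          (1/Real.sqrt (s^2 - t^2) - 1/Real.sqrt (R^2 - t^2))) := by
      funext s
      by_cases hs : s ∈ Set.Ioo t R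
      · rw [Set.indicator_of_mem hs]
        have h1 : ∀ x : ℝ, ‖Function.uncurry (fun x s =>
            if t < s ∧ s < x ∧ x ≤ R then
              (2 * (k₁ s * Real.sqrt (s^2 - t^2))) * (x / Real.sqrt ((x^2 - t^2)^3))
            else 0) (x, s)‖
            = (Set.Ioc s R).indicator (fun x => ‖2 * (k₁ s * Real.sqrt (s^2 - t^2))‖ *
              (x / Real.sqrt ((x^2 - t^2)^3))) x := by
          intro x
          simp only [Function.uncurry, Set.indicator_apply, Set.mem_Ioc]
          by_cases hx : s < x ∧ x ≤ R
          · rw [if_pos ⟨hs.1, hx.1, hx.2⟩, if_pos hx, norm_mul]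
            congr 1
            rw [Real.norm_of_nonneg]
            have hx0 : 0 < x := ht.trans (hs.1.trans hx.1)
            exact div_nonneg hx0.le (Real.sqrt_nonneg _)
          · rw [if_neg (by tauto), if_neg hx, norm_zero]
        simp only [h1]
        rw [MeasureTheory.integral_indicator measurableSet_Ioc]
        rw [MeasureTheory.integral_const_mul]
        congr 1
        have := (keyB2 ht hs.1 hs.2.le).2
        rw [intervalIntegral.integral_of_le hs.2.le] at this
        exact this
      · rw [Set.indicator_of_notMem hs]
        have h0 : ∀ x : ℝ, Function.uncurry (fun x s =>
            if t < s ∧ s < x ∧ x ≤ R then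
              (2 * (k₁ s * Real.sqrt (s^2 - t^2))) * (x / Real.sqrt ((x^2 - t^2)^3))
            else 0) (x, s) = 0 := by
          intro x
          simp only [Function.uncurry]
          rw [if_neg]
          rintro ⟨h1, h2, h3⟩
          exact hs ⟨h1, lt_of_lt_of_le h2 h3⟩
        simp only [h0, norm_zero, MeasureTheory.integral_zero]
    rw [heq, integrable_indicator_iff measurableSet_Ioo]
    have hceq : ∀ s ∈ Set.Ioo t R, ‖2 * (k₁ s * Real.sqrt (s^2 - t^2))‖ *
        (1/Real.sqrt (s^2 - t^2) - 1/Real.sqrt (R^2 - t^2))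
        = ‖2 * k₁ s‖ * (1 - Real.sqrt (s^2 - t^2)/Real.sqrt (R^2 - t^2)) := by
      intro s hs
      have hd : 0 < Real.sqrt (s^2 - t^2) := Real.sqrt_pos.2 (by nlinarith [hs.1, ht])
      have hcR : 0 < Real.sqrt (R^2 - t^2) := Real.sqrt_pos.2 (by nlinarith [hs.2, hs.1, ht])
      rw [norm_mul, norm_mul, Real.norm_of_nonneg hd.le, norm_mul]
      rw [Real.norm_of_nonneg (by norm_num : (0:ℝ) ≤ 2)]
      field_simp
    have hI : IntegrableOn (fun s => ‖2 * k₁ s‖ *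
        (1 - Real.sqrt (s^2 - t^2)/Real.sqrt (R^2 - t^2))) (Set.Ioo t R) volume := by
      have : IntegrableOn (fun s => ‖2 * k₁ s‖ *
          (1 - Real.sqrt (s^2 - t^2)/Real.sqrt (R^2 - t^2))) (Set.Icc t R) volume := by
        apply ContinuousOn.integrableOn_compact isCompact_Icc
        apply ContinuousOn.mul ((continuous_const.mul hk₁).norm.continuousOn)
        apply ContinuousOn.sub continuousOn_const
        exact ((Real.continuous_sqrt.comp (by continuity)).div_const _).continuousOn
      exact this.mono_set Set.Ioo_subset_Icc_self
    exact hI.congr_fun (fun s hs => (hceq s hs).symm) measurableSet_Ioo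


/-- Let `R > 0` and let `k` be continuously differentiable on `[0, R]`.  Define
`q x = 2 ∫_x^R s k(s)/√(s² − x²) ds`.  Then for every `t ∈ (0, R)`,
`k t = −(1/π)·[(q R − q t)/√(R² − t²) + ∫_t^R x (q x − q t)/√((x² − t²)³) dx]`,
the integral converging (the factor `q x − q t` compensates the non-integrable
singularity `(x² − t²)^{−3/2}` at `x = t`). -/
theorem abel_inversion_derivative_free
    (R : ℝ) (hR : 0 < R) (k : ℝ → ℝ)
    (hk : ContDiffOn ℝ 1 k (Set.Icc 0 R))
    (q : ℝ → ℝ)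
    (hq : ∀ x, q x = 2 * ∫ s in x..R, s * k s / Real.sqrt (s ^ 2 - x ^ 2)) :
    ∀ t ∈ Set.Ioo (0 : ℝ) R,
      IntervalIntegrable
          (fun x => x * (q x - q t) / Real.sqrt ((x ^ 2 - t ^ 2) ^ 3)) volume t R ∧
        k t = -(1 / Real.pi) *
            ((q R - q t) / Real.sqrt (R ^ 2 - t ^ 2)
              + ∫ x in t..R, x * (q x - q t) / Real.sqrt ((x ^ 2 - t ^ 2) ^ 3)) := by
  intro t ht
  obtain ⟨ht0, htR⟩ := ht
  -- globally continuous extensions of k and its derivative on [0,R]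
  have hclc : Continuous (fun y : ℝ => min (max y 0) R) :=
    (continuous_id.max continuous_const).min continuous_const
  have hclmem : ∀ y : ℝ, min (max y 0) R ∈ Set.Icc 0 R :=
    fun y => ⟨le_min (le_max_right _ _) hR.le, min_le_right _ _⟩
  have hclid : ∀ y ∈ Set.Icc 0 R, min (max y 0) R = y := by
    intro y hy
    rw [max_eq_left hy.1, min_eq_left hy.2]
  set k₀ : ℝ → ℝ := fun y => k (min (max y 0) R) with hk₀def
  set k₁ : ℝ → ℝ := fun y => derivWithin k (Set.Icc 0 R) (min (max y 0) R) with hk₁def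
  have hk₀c : Continuous k₀ := hk.continuousOn.comp_continuous hclc hclmem
  have hk₁c : Continuous k₁ :=
    (hk.continuousOn_derivWithin (uniqueDiffOn_Icc hR) le_rfl).comp_continuous hclc hclmem
  have hk₀eq : ∀ y ∈ Set.Icc 0 R, k₀ y = k y := by
    intro y hy
    simp only [hk₀def]
    rw [hclid y hy]
  have hd : ∀ s ∈ Set.Ioo 0 R, HasDerivAt k₀ (k₁ s) s := by
    intro s hs
    have hmem : s ∈ Set.Icc 0 R := ⟨hs.1.le, hs.2.le⟩
    have hnhds : Set.Icc 0 R ∈ nhds s := Icc_mem_nhds hs.1 hs.2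
    have h1 : HasDerivAt k (derivWithin k (Set.Icc 0 R) s) s :=
      (((hk.differentiableOn one_ne_zero) s hmem).hasDerivWithinAt).hasDerivAt hnhds
    have h2 : k₀ =ᶠ[nhds s] k := Filter.eventuallyEq_of_mem hnhds hk₀eq
    have h3 := h1.congr_of_eventuallyEq h2
    simp only [hk₁def]
    rw [hclid s hmem]
    exact h3
  have hsqc : Continuous (fun s : ℝ => k₁ s * Real.sqrt (s^2 - t^2)) :=
    hk₁c.mul (Real.continuous_sqrt.comp (by fun_prop))
  -- representation of q
  have hq' : ∀ x, 0 < x → x ≤ R →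
      q x = 2 * (k₀ R * Real.sqrt (R^2 - x^2) - ∫ s in x..R, k₁ s * Real.sqrt (s^2 - x^2)) := by
    intro x hx hxR
    rw [hq x]
    have hcg : (∫ s in x..R, s * k s / Real.sqrt (s ^ 2 - x ^ 2))
        = ∫ s in x..R, s * k₀ s / Real.sqrt (s ^ 2 - x ^ 2) := by
      apply intervalIntegral.integral_congr
      intro s hs
      rw [Set.uIcc_of_le hxR] at hs
      show s * k s / Real.sqrt (s ^ 2 - x ^ 2) = s * k₀ s / Real.sqrt (s ^ 2 - x ^ 2)
      rw [hk₀eq s ⟨le_trans hx.le hs.1, hs.2⟩]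
    rw [hcg, repA k₀ k₁ hk₀c hk₁c hd hx hxR]
  have hc : 0 < Real.sqrt (R^2 - t^2) := Real.sqrt_pos.2 (by nlinarith)
  have hqt : q t = 2 * (k₀ R * Real.sqrt (R^2 - t^2) - ∫ s in t..R, k₁ s * Real.sqrt (s^2 - t^2)) :=
    hq' t ht0 htR.le
  have hqR : q R = 0 := by
    rw [hq' R hR le_rfl]
    simp
  -- pieces
  set f₁ : ℝ → ℝ := fun x => (-(2 * k₀ R)) *
    (x * (Real.sqrt (R^2 - t^2) - Real.sqrt (R^2 - x^2)) / Real.sqrt ((x^2 - t^2)^3)) with hf₁def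
  set F₂ : ℝ → ℝ → ℝ := fun x s =>
    if t < s ∧ s < x ∧ x ≤ R then
      (2 * (k₁ s * Real.sqrt (s^2 - t^2))) * (x / Real.sqrt ((x^2 - t^2)^3))
    else 0 with hF₂def
  set F₃ : ℝ → ℝ → ℝ := fun x s =>
    if t < x ∧ x < s ∧ s < R then
      (2 * k₁ s) * (x * (Real.sqrt (s^2 - t^2) - Real.sqrt (s^2 - x^2)) / Real.sqrt ((x^2 - t^2)^3))
    else 0 with hF₃def
  set f₂ : ℝ → ℝ := fun x => ∫ s, F₂ x s with hf₂def
  set f₃ : ℝ → ℝ := fun x => ∫ s, F₃ x s with hf₃def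
  have hIF₂ : Integrable (Function.uncurry F₂) (volume.prod volume) := fub2 ht0 htR k₁ hk₁c
  have hIF₃ : Integrable (Function.uncurry F₃) (volume.prod volume) := fub3 ht0 htR k₁ hk₁c
  have hIf₂ : Integrable f₂ volume := hIF₂.integral_prod_left
  have hIf₃ : Integrable f₃ volume := hIF₃.integral_prod_left
  have hIf₁ : IntegrableOn f₁ (Set.Ioc t R) volume := ((keyB ht0 htR).1).const_mul _
  -- slice formulas for f₂, f₃
  have hf₂eq : ∀ x ∈ Set.Ioc t R,
      f₂ x = (x / Real.sqrt ((x^2 - t^2)^3)) * (2 * ∫ s in t..x, k₁ s * Real.sqrt (s^2 - t^2)) := by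
    intro x hx
    have h1 : ∀ s, F₂ x s = (Set.Ioo t x).indicator
        (fun s => (2 * (k₁ s * Real.sqrt (s^2 - t^2))) * (x / Real.sqrt ((x^2 - t^2)^3))) s := by
      intro s
      simp only [hF₂def, Set.indicator_apply, Set.mem_Ioo]
      by_cases hs : t < s ∧ s < x
      · rw [if_pos ⟨hs.1, hs.2, hx.2⟩, if_pos hs]
      · rw [if_neg (by tauto), if_neg hs]
    simp only [hf₂def, h1]
    rw [MeasureTheory.integral_indicator measurableSet_Ioo,
      ← MeasureTheory.integral_Ioc_eq_integral_Ioo,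
      ← intervalIntegral.integral_of_le hx.1.le,
      intervalIntegral.integral_mul_const, intervalIntegral.integral_const_mul]
    ring
  have hf₃eq : ∀ x ∈ Set.Ioc t R,
      f₃ x = (x / Real.sqrt ((x^2 - t^2)^3)) *
        (2 * ∫ s in x..R, k₁ s * (Real.sqrt (s^2 - t^2) - Real.sqrt (s^2 - x^2))) := by
    intro x hx
    have h1 : ∀ s, F₃ x s = (Set.Ioo x R).indicator
        (fun s => (x / Real.sqrt ((x^2 - t^2)^3)) *
          (2 * (k₁ s * (Real.sqrt (s^2 - t^2) - Real.sqrt (s^2 - x^2))))) s := by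
      intro s
      simp only [hF₃def, Set.indicator_apply, Set.mem_Ioo]
      by_cases hs : x < s ∧ s < R
      · rw [if_pos ⟨hx.1, hs.1, hs.2⟩, if_pos hs]
        ring
      · rw [if_neg (by tauto), if_neg hs]
    simp only [hf₃def, h1]
    rw [MeasureTheory.integral_indicator measurableSet_Ioo,
      ← MeasureTheory.integral_Ioc_eq_integral_Ioo,
      ← intervalIntegral.integral_of_le hx.2,
      intervalIntegral.integral_const_mul]
    congr 1
    rw [intervalIntegral.integral_const_mul]
  have hf₂t : f₂ t = 0 := by
    have h0 : ∀ s, F₂ t s = 0 := by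
      intro s
      simp only [hF₂def]
      rw [if_neg]
      rintro ⟨h1, h2, _⟩
      exact lt_irrefl t (h1.trans h2)
    simp only [hf₂def, h0, MeasureTheory.integral_zero]
  have hf₃t : f₃ t = 0 := by
    have h0 : ∀ s, F₃ t s = 0 := by
      intro s
      simp only [hF₃def]
      rw [if_neg]
      rintro ⟨h1, _, _⟩
      exact lt_irrefl t h1
    simp only [hf₃def, h0, MeasureTheory.integral_zero]
  -- decomposition
  have hdecomp : ∀ x ∈ Set.Icc t R,
      x * (q x - q t) / Real.sqrt ((x ^ 2 - t ^ 2) ^ 3) = f₁ x + f₂ x + f₃ x := by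
    intro x hx
    rcases eq_or_lt_of_le hx.1 with rfl | hxt
    · rw [hf₂t, hf₃t]
      simp only [hf₁def]
      rw [sub_self, mul_zero, zero_div, sub_self]
      ring
    · have hx' : 0 < x := ht0.trans hxt
      have hqx := hq' x hx' hx.2
      have hsplit : (∫ s in t..R, k₁ s * Real.sqrt (s^2 - t^2))
          = (∫ s in t..x, k₁ s * Real.sqrt (s^2 - t^2))
            + ∫ s in x..R, k₁ s * Real.sqrt (s^2 - t^2) :=
        (intervalIntegral.integral_add_adjacent_intervals
          (hsqc.intervalIntegrable _ _) (hsqc.intervalIntegrable _ _)).symm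
      have hsub : (∫ s in x..R, k₁ s * (Real.sqrt (s^2 - t^2) - Real.sqrt (s^2 - x^2)))
          = (∫ s in x..R, k₁ s * Real.sqrt (s^2 - t^2))
            - ∫ s in x..R, k₁ s * Real.sqrt (s^2 - x^2) := by
        have hsqx : Continuous (fun s : ℝ => k₁ s * Real.sqrt (s^2 - x^2)) :=
          hk₁c.mul (Real.continuous_sqrt.comp (by fun_prop))
        rw [← intervalIntegral.integral_sub (hsqc.intervalIntegrable _ _)
          (hsqx.intervalIntegrable _ _)]
        apply intervalIntegral.integral_congr
        intro s _
        ring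
      rw [hf₂eq x ⟨hxt, hx.2⟩, hf₃eq x ⟨hxt, hx.2⟩, hsub, hqx, hqt, hsplit]
      simp only [hf₁def]
      ring
  -- first conjunct
  have hIsum : IntegrableOn (fun x => f₁ x + f₂ x + f₃ x) (Set.Ioc t R) volume :=
    (hIf₁.add hIf₂.integrableOn).add hIf₃.integrableOn
  have hIg : IntervalIntegrable
      (fun x => x * (q x - q t) / Real.sqrt ((x ^ 2 - t ^ 2) ^ 3)) volume t R := by
    rw [intervalIntegrable_iff_integrableOn_Ioc_of_le htR.le]
    exact hIsum.congr_fun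
      (fun x hx => (hdecomp x (Set.Ioc_subset_Icc_self hx)).symm) measurableSet_Ioc
  refine ⟨hIg, ?_⟩
  -- integral of f₁
  have hval₁ : ∫ x in t..R, f₁ x = (-(2 * k₀ R)) * (π/2 - 1) := by
    simp only [hf₁def]
    rw [intervalIntegral.integral_const_mul, (keyB ht0 htR).2]
  -- FTC for k₁
  have hkint : ∫ s in t..R, k₁ s = k₀ R - k₀ t :=
    integral_eq_sub_of_hasDeriv_right_of_le htR.le hk₀c.continuousOn
      (fun s hs => (hd s ⟨ht0.trans hs.1, hs.2⟩).hasDerivWithinAt)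
      (hk₁c.intervalIntegrable t R)
  -- integral of f₂ via Fubini
  have hval₂ : ∫ x in t..R, f₂ x
      = 2 * (k₀ R - k₀ t)
        - (2 / Real.sqrt (R^2 - t^2)) * ∫ s in t..R, k₁ s * Real.sqrt (s^2 - t^2) := by
    have h0 : ∀ x ∉ Set.Ioc t R, f₂ x = 0 := by
      intro x hx
      have : ∀ s, F₂ x s = 0 := by
        intro s
        simp only [hF₂def]
        rw [if_neg]
        rintro ⟨h1, h2, h3⟩
        exact hx ⟨h1.trans h2, h3⟩
      simp only [hf₂def, this, MeasureTheory.integral_zero]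
    rw [intervalIntegral.integral_of_le htR.le,
      MeasureTheory.setIntegral_eq_integral_of_forall_compl_eq_zero h0]
    rw [hf₂def]
    rw [MeasureTheory.integral_integral_swap hIF₂]
    have hslice : ∀ s, (∫ x, F₂ x s) = (Set.Ioo t R).indicator
        (fun s => (2 * (k₁ s * Real.sqrt (s^2 - t^2))) *
          (1/Real.sqrt (s^2 - t^2) - 1/Real.sqrt (R^2 - t^2))) s := by
      intro s
      by_cases hs : s ∈ Set.Ioo t R
      · rw [Set.indicator_of_mem hs]
        have h1 : ∀ x, F₂ x s = (Set.Ioc s R).indicator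
            (fun x => (2 * (k₁ s * Real.sqrt (s^2 - t^2))) *
              (x / Real.sqrt ((x^2 - t^2)^3))) x := by
          intro x
          simp only [hF₂def, Set.indicator_apply, Set.mem_Ioc]
          by_cases hx : s < x ∧ x ≤ R
          · rw [if_pos ⟨hs.1, hx.1, hx.2⟩, if_pos hx]
          · rw [if_neg (by tauto), if_neg hx]
        simp only [h1]
        rw [MeasureTheory.integral_indicator measurableSet_Ioc,
          MeasureTheory.integral_const_mul]
        congr 1
        have h2 := (keyB2 ht0 hs.1 hs.2.le).2
        rw [intervalIntegral.integral_of_le hs.2.le] at h2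
        exact h2
      · rw [Set.indicator_of_notMem hs]
        have h02 : ∀ x, F₂ x s = 0 := by
          intro x
          simp only [hF₂def]
          rw [if_neg]
          rintro ⟨h1, h2, h3⟩
          exact hs ⟨h1, lt_of_lt_of_le h2 h3⟩
        simp only [h02, MeasureTheory.integral_zero]
    simp only [hslice]
    rw [MeasureTheory.integral_indicator measurableSet_Ioo]
    have hcong : ∀ s ∈ Set.Ioo t R,
        (2 * (k₁ s * Real.sqrt (s^2 - t^2))) *
          (1/Real.sqrt (s^2 - t^2) - 1/Real.sqrt (R^2 - t^2))
        = 2 * k₁ s - (2 / Real.sqrt (R^2 - t^2)) * (k₁ s * Real.sqrt (s^2 - t^2)) := by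
      intro s hs
      have hds : 0 < Real.sqrt (s^2 - t^2) := Real.sqrt_pos.2 (by nlinarith [hs.1])
      field_simp
    rw [MeasureTheory.setIntegral_congr_fun measurableSet_Ioo hcong,
      ← MeasureTheory.integral_Ioc_eq_integral_Ioo,
      ← intervalIntegral.integral_of_le htR.le,
      intervalIntegral.integral_sub (f := fun s => 2 * k₁ s)
        (g := fun s => 2 / Real.sqrt (R^2 - t^2) * (k₁ s * Real.sqrt (s^2 - t^2)))
        ((continuous_const.mul hk₁c).intervalIntegrable _ _)
        ((continuous_const.mul hsqc).intervalIntegrable _ _),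
      intervalIntegral.integral_const_mul, intervalIntegral.integral_const_mul, hkint]
  -- integral of f₃ via Fubini
  have hval₃ : ∫ x in t..R, f₃ x = (2 * (k₀ R - k₀ t)) * (π/2 - 1) := by
    have h0 : ∀ x ∉ Set.Ioc t R, f₃ x = 0 := by
      intro x hx
      have : ∀ s, F₃ x s = 0 := by
        intro s
        simp only [hF₃def]
        rw [if_neg]
        rintro ⟨h1, h2, h3⟩
        exact hx ⟨h1, le_of_lt (h2.trans h3)⟩
      simp only [hf₃def, this, MeasureTheory.integral_zero]
    rw [intervalIntegral.integral_of_le htR.le,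
      MeasureTheory.setIntegral_eq_integral_of_forall_compl_eq_zero h0]
    rw [hf₃def]
    rw [MeasureTheory.integral_integral_swap hIF₃]
    have hslice : ∀ s, (∫ x, F₃ x s) = (Set.Ioo t R).indicator
        (fun s => (2 * k₁ s) * (π/2 - 1)) s := by
      intro s
      by_cases hs : s ∈ Set.Ioo t R
      · rw [Set.indicator_of_mem hs]
        have h1 : ∀ x, F₃ x s = (Set.Ioo t s).indicator
            (fun x => (2 * k₁ s) * (x * (Real.sqrt (s^2 - t^2) - Real.sqrt (s^2 - x^2))
              / Real.sqrt ((x^2 - t^2)^3))) x := by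
          intro x
          simp only [hF₃def, Set.indicator_apply, Set.mem_Ioo]
          by_cases hx : t < x ∧ x < s
          · rw [if_pos ⟨hx.1, hx.2, hs.2⟩, if_pos hx]
          · rw [if_neg (by tauto), if_neg hx]
        simp only [h1]
        rw [MeasureTheory.integral_indicator measurableSet_Ioo,
          MeasureTheory.integral_const_mul]
        congr 1
        have h2 := (keyB ht0 hs.1).2
        rw [intervalIntegral.integral_of_le hs.1.le,
          MeasureTheory.integral_Ioc_eq_integral_Ioo] at h2
        exact h2
      · rw [Set.indicator_of_notMem hs]
        have h03 : ∀ x, F₃ x s = 0 := by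
          intro x
          simp only [hF₃def]
          rw [if_neg]
          rintro ⟨h1, h2, h3⟩
          exact hs ⟨h1.trans h2, h3⟩
        simp only [h03, MeasureTheory.integral_zero]
    simp only [hslice]
    rw [MeasureTheory.integral_indicator measurableSet_Ioo,
      ← MeasureTheory.integral_Ioc_eq_integral_Ioo,
      ← intervalIntegral.integral_of_le htR.le,
      intervalIntegral.integral_mul_const, intervalIntegral.integral_const_mul, hkint]
  -- assemble
  have hgsum : (∫ x in t..R, x * (q x - q t) / Real.sqrt ((x ^ 2 - t ^ 2) ^ 3))
      = (∫ x in t..R, f₁ x) + (∫ x in t..R, f₂ x) + ∫ x in t..R, f₃ x := by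
    have i1 : IntervalIntegrable f₁ volume t R :=
      (intervalIntegrable_iff_integrableOn_Ioc_of_le htR.le).2 hIf₁
    have i2 : IntervalIntegrable f₂ volume t R := hIf₂.intervalIntegrable
    have i3 : IntervalIntegrable f₃ volume t R := hIf₃.intervalIntegrable
    rw [intervalIntegral.integral_congr (g := fun x => f₁ x + f₂ x + f₃ x)
      (fun x hx => hdecomp x (by rwa [Set.uIcc_of_le htR.le] at hx))]
    rw [intervalIntegral.integral_add (i1.add i2) i3, intervalIntegral.integral_add i1 i2]
  rw [← hk₀eq t ⟨ht0.le, htR.le⟩, hgsum, hval₁, hval₂, hval₃, hqR, hqt]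
  have hpi := Real.pi_ne_zero
  field_simp
  ring
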